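/- Let y₋, y₊ > 0 be real numbers and define the real polynomials H(X) = (y₋² + 1)X² + (3y₋² + y₊y₋ + 2)X + (y₊² + 3y₋² + 3y₊y₋ + 1) and R(X) = (3y₊² + y₋² + 3y₊y₋ + 1)X² + (3y₊² + y₊y₋ + 2)X + (y₊² + 1). Then H and R have no real root, and the function f : ℝ → ℝ defined by f(ξ) = ξ³·H(ξ)/R(ξ) is strictly increasing and is a bijection from ℝ onto ℝ. -/

import Mathlib

private lemma quad_pos' (A B C : ℝ) (hC : 0 < C) (hD : B ^ 2 < 4 * C * A) :
    ∀ x : ℝ, 0 < C * x ^ 2 + B * x + A := by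
  intro x
  nlinarith [sq_nonneg (2 * C * x + B)]

private lemma bound_top (ca cb cc cA cB cC x : ℝ) (ha : 0 < ca) (hb : 0 < cb) (hc : 0 < cc)
    (hA : 0 < cA) (hB : 0 < cB) (hC : 0 < cC) (hx : 1 ≤ x) :
    ca * x * (cA * x ^ 2 + cB * x + cC) ≤
      (cA + cB + cC) * (ca * x ^ 5 + cb * x ^ 4 + cc * x ^ 3) := by
  have hx0 : (0:ℝ) ≤ x := le_trans zero_le_one hx
  have hx2 : (1:ℝ) ≤ x ^ 2 := by nlinarith
  have hx3 : (1:ℝ) ≤ x ^ 3 := by nlinarith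
  have hx4 : (1:ℝ) ≤ x ^ 4 := by nlinarith
  have h3 : (0:ℝ) ≤ x ^ 3 := by positivity
  have h4 : (0:ℝ) ≤ x ^ 4 := by positivity
  have h53 : (0:ℝ) ≤ x ^ 5 - x ^ 3 := by nlinarith [mul_nonneg h3 (by linarith : (0:ℝ) ≤ x ^ 2 - 1)]
  have h52 : (0:ℝ) ≤ x ^ 5 - x ^ 2 := by
    nlinarith [mul_nonneg (sq_nonneg x) (by linarith : (0:ℝ) ≤ x ^ 3 - 1)]
  have h51 : (0:ℝ) ≤ x ^ 5 - x := by
    nlinarith [mul_nonneg hx0 (by linarith : (0:ℝ) ≤ x ^ 4 - 1)]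
  nlinarith [mul_nonneg (mul_nonneg ha.le hA.le) h53, mul_nonneg (mul_nonneg ha.le hB.le) h52,
    mul_nonneg (mul_nonneg ha.le hC.le) h51,
    mul_nonneg (mul_nonneg (by linarith : (0:ℝ) ≤ cA + cB + cC) hb.le) h4,
    mul_nonneg (mul_nonneg (by linarith : (0:ℝ) ≤ cA + cB + cC) hc.le) h3]

private lemma bound_bot (ca cb cc cA cB cC x : ℝ) (ha : 0 < ca)
    (hA : 0 < cA) (hB : 0 < cB) (hC : 0 < cC) (hD : cb ^ 2 < 4 * ca * cc) (hx : x ≤ -1) :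
    4 * ca * (cA + cB + cC) * (ca * x ^ 5 + cb * x ^ 4 + cc * x ^ 3) ≤
      (4 * ca * cc - cb ^ 2) * x * (cA * x ^ 2 + cB * x + cC) := by
  have hnx : (0:ℝ) ≤ -x := by linarith
  have hx2x : (0:ℝ) ≤ x ^ 2 - x := by nlinarith [sq_nonneg (x + 1)]
  have hx21 : (0:ℝ) ≤ x ^ 2 - 1 := by nlinarith [sq_nonneg (x + 1)]
  have hx3 : (0:ℝ) ≤ -x ^ 3 := by nlinarith [sq_nonneg x, sq_nonneg (x + 1)]
  have hDpos : (0:ℝ) < 4 * ca * cc - cb ^ 2 := by linarith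
  have hs : (0:ℝ) < cA + cB + cC := by linarith
  nlinarith [mul_nonneg (mul_nonneg (mul_nonneg hDpos.le hB.le) hnx) hx2x,
    mul_nonneg (mul_nonneg (mul_nonneg hDpos.le hC.le) hnx) hx21,
    mul_nonneg (mul_nonneg hs.le hx3) (sq_nonneg (2 * ca * x + cb))]

set_option maxHeartbeats 1600000 in
/-- `H` and `R` have no real root, and `f(ξ) = ξ³ H(ξ)/R(ξ)` is strictly increasing and a
bijection from `ℝ` onto `ℝ`. -/
theorem stmt_2 (ym yp : ℝ) (hym : 0 < ym) (hyp : 0 < yp)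
    (H R f : ℝ → ℝ)
    (hH : H = fun x : ℝ =>
      (ym ^ 2 + 1) * x ^ 2 + (3 * ym ^ 2 + yp * ym + 2) * x +
        (yp ^ 2 + 3 * ym ^ 2 + 3 * yp * ym + 1))
    (hR : R = fun x : ℝ =>
      (3 * yp ^ 2 + ym ^ 2 + 3 * yp * ym + 1) * x ^ 2 + (3 * yp ^ 2 + yp * ym + 2) * x +
        (yp ^ 2 + 1))
    (hf : f = fun ξ : ℝ => ξ ^ 3 * H ξ / R ξ) :
    (∀ x : ℝ, H x ≠ 0) ∧ (∀ x : ℝ, R x ≠ 0) ∧ StrictMono f ∧ Function.Bijective f := by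
  obtain ⟨ca, hca_def⟩ : ∃ ca : ℝ, ca = ym ^ 2 + 1 := ⟨_, rfl⟩
  obtain ⟨cb, hcb_def⟩ : ∃ cb : ℝ, cb = 3 * ym ^ 2 + yp * ym + 2 := ⟨_, rfl⟩
  obtain ⟨cc, hcc_def⟩ : ∃ cc : ℝ, cc = yp ^ 2 + 3 * ym ^ 2 + 3 * yp * ym + 1 := ⟨_, rfl⟩
  obtain ⟨cA, hcA_def⟩ : ∃ cA : ℝ, cA = 3 * yp ^ 2 + ym ^ 2 + 3 * yp * ym + 1 := ⟨_, rfl⟩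
  obtain ⟨cB, hcB_def⟩ : ∃ cB : ℝ, cB = 3 * yp ^ 2 + yp * ym + 2 := ⟨_, rfl⟩
  obtain ⟨cC, hcC_def⟩ : ∃ cC : ℝ, cC = yp ^ 2 + 1 := ⟨_, rfl⟩
  have hca : 0 < ca := by rw [hca_def]; positivity
  have hcb : 0 < cb := by rw [hcb_def]; nlinarith [mul_pos hyp hym]
  have hcc : 0 < cc := by rw [hcc_def]; nlinarith [mul_pos hyp hym]
  have hcA : 0 < cA := by rw [hcA_def]; nlinarith [mul_pos hyp hym]
  have hcB : 0 < cB := by rw [hcB_def]; nlinarith [mul_pos hyp hym]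
  have hcC : 0 < cC := by rw [hcC_def]; positivity
  have hdH : cb ^ 2 < 4 * ca * cc := by
    rw [hca_def, hcb_def, hcc_def]
    nlinarith [sq_nonneg (ym + yp), sq_nonneg (ym * (ym + yp))]
  have hdR : cB ^ 2 < 4 * cA * cC := by
    rw [hcA_def, hcB_def, hcC_def]
    nlinarith [sq_nonneg (ym + yp), sq_nonneg (yp * (ym + yp))]
  have hHpos : ∀ x : ℝ, 0 < H x := by
    intro x; rw [hH]
    simp only [← hca_def, ← hcb_def, ← hcc_def]
    exact quad_pos' _ _ _ hca (by nlinarith) x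
  have hRpos : ∀ x : ℝ, 0 < R x := by
    intro x; rw [hR]
    simp only [← hcA_def, ← hcB_def, ← hcC_def]
    exact quad_pos' _ _ _ hcA (by nlinarith) x
  have hRabs : ∀ x : ℝ, 0 < cA * x ^ 2 + cB * x + cC := fun x =>
    quad_pos' cC cB cA hcA (by nlinarith) x
  have hfx : ∀ x : ℝ, f x = (ca * x ^ 5 + cb * x ^ 4 + cc * x ^ 3) /
      (cA * x ^ 2 + cB * x + cC) := by
    intro x
    simp only [hf, hH, hR, hca_def, hcb_def, hcc_def, hcA_def, hcB_def, hcC_def]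
    ring
  -- the quadratic factor of the derivative numerator
  obtain ⟨Aq, hAq_def⟩ : ∃ A : ℝ, A = 9 * yp ^ 2 + 3 * yp ^ 4 + 18 * ym * yp +
      3 * ym * yp ^ 3 + 9 * ym ^ 2 + 3 * ym ^ 3 * yp + 3 * ym ^ 4 := ⟨_, rfl⟩
  obtain ⟨Bq, hBq_def⟩ : ∃ B : ℝ, B = -12 * yp ^ 2 - 18 * ym * yp + 6 * ym * yp ^ 3 -
      6 * ym ^ 2 - 12 * ym ^ 3 * yp - 6 * ym ^ 4 := ⟨_, rfl⟩
  obtain ⟨Cq, hCq_def⟩ : ∃ C : ℝ, C = 3 + 9 * yp ^ 2 + 9 * ym * yp + 6 * ym ^ 2 +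
      9 * ym ^ 2 * yp ^ 2 + 9 * ym ^ 3 * yp + 3 * ym ^ 4 := ⟨_, rfl⟩
  have hCq : 0 < Cq := by rw [hCq_def]; positivity
  have hdq : Bq ^ 2 < 4 * Cq * Aq := by
    have key : 4 * Cq * Aq - Bq ^ 2 = 108 * yp ^ 2 + 216 * yp ^ 4 + 108 * yp ^ 6 +
        216 * ym * yp + 576 * ym * yp ^ 3 + 360 * ym * yp ^ 5 + 108 * ym ^ 2 +
        720 * ym ^ 2 * yp ^ 2 + 720 * ym ^ 2 * yp ^ 4 + 72 * ym ^ 2 * yp ^ 6 +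
        576 * ym ^ 3 * yp + 936 * ym ^ 3 * yp ^ 3 + 216 * ym ^ 3 * yp ^ 5 + 216 * ym ^ 4 +
        720 * ym ^ 4 * yp ^ 2 + 288 * ym ^ 4 * yp ^ 4 + 360 * ym ^ 5 * yp +
        216 * ym ^ 5 * yp ^ 3 + 108 * ym ^ 6 + 72 * ym ^ 6 * yp ^ 2 := by
      rw [hAq_def, hBq_def, hCq_def]; ring
    have hpos : (0:ℝ) < 108 * yp ^ 2 + 216 * yp ^ 4 + 108 * yp ^ 6 +
        216 * ym * yp + 576 * ym * yp ^ 3 + 360 * ym * yp ^ 5 + 108 * ym ^ 2 +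
        720 * ym ^ 2 * yp ^ 2 + 720 * ym ^ 2 * yp ^ 4 + 72 * ym ^ 2 * yp ^ 6 +
        576 * ym ^ 3 * yp + 936 * ym ^ 3 * yp ^ 3 + 216 * ym ^ 3 * yp ^ 5 + 216 * ym ^ 4 +
        720 * ym ^ 4 * yp ^ 2 + 288 * ym ^ 4 * yp ^ 4 + 360 * ym ^ 5 * yp +
        216 * ym ^ 5 * yp ^ 3 + 108 * ym ^ 6 + 72 * ym ^ 6 * yp ^ 2 := by positivity
    linarith [key, hpos]
  have hqpos : ∀ x : ℝ, 0 < Cq * (x + 1) ^ 2 + Bq * (x + 1) + Aq :=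
    fun x => quad_pos' Aq Bq Cq hCq hdq (x + 1)
  -- derivative of f
  have hderiv : ∀ x : ℝ, HasDerivAt f
      (((ca * (5 * x ^ 4) + cb * (4 * x ^ 3) + cc * (3 * x ^ 2)) * (cA * x ^ 2 + cB * x + cC) -
        (ca * x ^ 5 + cb * x ^ 4 + cc * x ^ 3) * (cA * (2 * x) + cB)) /
        (cA * x ^ 2 + cB * x + cC) ^ 2) x := by
    intro x
    rw [funext hfx]
    have h5 : HasDerivAt (fun y : ℝ => ca * y ^ 5) (ca * (5 * x ^ 4)) x := by
      convert (hasDerivAt_pow 5 x).const_mul ca using 1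
      all_goals (try push_cast); all_goals (first | rfl | ring)
    have h4 : HasDerivAt (fun y : ℝ => cb * y ^ 4) (cb * (4 * x ^ 3)) x := by
      convert (hasDerivAt_pow 4 x).const_mul cb using 1
      all_goals (try push_cast); all_goals (first | rfl | ring)
    have h3 : HasDerivAt (fun y : ℝ => cc * y ^ 3) (cc * (3 * x ^ 2)) x := by
      convert (hasDerivAt_pow 3 x).const_mul cc using 1
      all_goals (try push_cast); all_goals (first | rfl | ring)
    have hN : HasDerivAt (fun x : ℝ => ca * x ^ 5 + cb * x ^ 4 + cc * x ^ 3)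
        (ca * (5 * x ^ 4) + cb * (4 * x ^ 3) + cc * (3 * x ^ 2)) x :=
      (h5.add h4).add h3
    have h2 : HasDerivAt (fun y : ℝ => cA * y ^ 2) (cA * (2 * x)) x := by
      convert (hasDerivAt_pow 2 x).const_mul cA using 1
      all_goals (try push_cast); all_goals (first | rfl | ring)
    have h1 : HasDerivAt (fun y : ℝ => cB * y) cB x := by
      simpa using (hasDerivAt_id x).const_mul cB
    have hRd : HasDerivAt (fun x : ℝ => cA * x ^ 2 + cB * x + cC) (cA * (2 * x) + cB) x :=
      (h2.add h1).add_const cC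
    exact hN.div hRd (hRabs x).ne'
  have hdpos : ∀ x : ℝ, x ≠ 0 → x ≠ -1 → 0 < deriv f x := by
    intro x hx0 hx1
    rw [(hderiv x).deriv]
    apply div_pos
    · have hnum : (ca * (5 * x ^ 4) + cb * (4 * x ^ 3) + cc * (3 * x ^ 2)) *
          (cA * x ^ 2 + cB * x + cC) -
          (ca * x ^ 5 + cb * x ^ 4 + cc * x ^ 3) * (cA * (2 * x) + cB) =
          x ^ 2 * (x + 1) ^ 2 * (Cq * (x + 1) ^ 2 + Bq * (x + 1) + Aq) := by
        rw [hca_def, hcb_def, hcc_def, hcA_def, hcB_def, hcC_def, hAq_def, hBq_def, hCq_def]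
        ring
      rw [hnum]
      have hx2 : 0 < x ^ 2 := (sq_nonneg x).lt_of_ne' (pow_ne_zero 2 hx0)
      have hx12 : 0 < (x + 1) ^ 2 := by
        have hne : x + 1 ≠ 0 := fun h => hx1 (by linarith)
        exact (sq_nonneg (x + 1)).lt_of_ne' (pow_ne_zero 2 hne)
      exact mul_pos (mul_pos hx2 hx12) (hqpos x)
    · exact pow_pos (hRabs x) 2
  have hcont : Continuous f := by
    rw [funext hfx]
    exact Continuous.div (by fun_prop) (by fun_prop) (fun x => (hRabs x).ne')
  -- strict monotonicity
  have s1 : StrictMonoOn f (Set.Iic (-1 : ℝ)) := by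
    apply strictMonoOn_of_deriv_pos (convex_Iic _) hcont.continuousOn
    intro x hx
    rw [interior_Iic] at hx
    exact hdpos x (by intro h; rw [h] at hx; norm_num at hx) (ne_of_lt hx)
  have s2 : StrictMonoOn f (Set.Icc (-1 : ℝ) 0) := by
    apply strictMonoOn_of_deriv_pos (convex_Icc _ _) hcont.continuousOn
    intro x hx
    rw [interior_Icc] at hx
    exact hdpos x (ne_of_lt hx.2) (ne_of_gt hx.1)
  have s3 : StrictMonoOn f (Set.Ici (0 : ℝ)) := by
    apply strictMonoOn_of_deriv_pos (convex_Ici _) hcont.continuousOn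
    intro x hx
    rw [interior_Ici] at hx
    exact hdpos x (ne_of_gt hx) (by intro h; rw [h] at hx; norm_num at hx)
  have hsm : StrictMono f := by
    intro u v huv
    rcases le_or_gt v (-1) with hv | hv
    · exact s1 (by simp only [Set.mem_Iic]; linarith) (by simpa using hv) huv
    rcases le_or_gt 0 u with hu | hu
    · exact s3 (by simpa using hu) (by simp only [Set.mem_Ici]; linarith) huv
    rcases le_or_gt u (-1) with hu1 | hu1
    · have h1 : f u ≤ f (-1) := by
        rcases eq_or_lt_of_le hu1 with h | h
        · rw [h]
        · exact le_of_lt (s1 (by simpa using hu1) (by simp) h)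
      rcases le_or_gt v 0 with hv0 | hv0
      · have h2 : f (-1) < f v := s2 (by simp) ⟨hv.le, hv0⟩ hv
        linarith
      · have h2 : f (-1) < f 0 := s2 (by simp) (by constructor <;> norm_num) (by norm_num)
        have h3 : f 0 < f v := s3 (by simp) (Set.mem_Ici.2 hv0.le) hv0
        linarith
    · rcases le_or_gt v 0 with hv0 | hv0
      · exact s2 ⟨hu1.le, hu.le⟩ ⟨by linarith, hv0⟩ huv
      · have h2 : f u < f 0 := s2 ⟨hu1.le, hu.le⟩ (by constructor <;> norm_num) hu
        have h3 : f 0 < f v := s3 (by simp) (Set.mem_Ici.2 hv0.le) hv0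
        linarith
  -- behaviour at infinity
  have hs : 0 < cA + cB + cC := by linarith
  have htop : Filter.Tendsto f Filter.atTop Filter.atTop := by
    apply Filter.tendsto_atTop_mono' Filter.atTop
      (f₁ := fun x : ℝ => (ca / (cA + cB + cC)) * x)
    · filter_upwards [Filter.eventually_ge_atTop (1 : ℝ)] with x hx
      rw [hfx x, le_div_iff₀ (hRabs x), div_mul_eq_mul_div, div_mul_eq_mul_div, div_le_iff₀ hs]
      have hb := bound_top ca cb cc cA cB cC x hca hcb hcc hcA hcB hcC hx
      nlinarith [hb]
    · exact Filter.Tendsto.const_mul_atTop (div_pos hca hs) Filter.tendsto_id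
  have hbot : Filter.Tendsto f Filter.atBot Filter.atBot := by
    apply Filter.tendsto_atBot_mono' Filter.atBot
      (f₁ := fun x : ℝ => ((4 * ca * cc - cb ^ 2) / (4 * ca * (cA + cB + cC))) * x)
    · filter_upwards [Filter.eventually_le_atBot (-1 : ℝ)] with x hx
      rw [hfx x, div_le_iff₀ (hRabs x), div_mul_eq_mul_div, div_mul_eq_mul_div,
        le_div_iff₀ (by positivity : (0:ℝ) < 4 * ca * (cA + cB + cC))]
      have hb := bound_bot ca cb cc cA cB cC x hca hcA hcB hcC hdH hx
      nlinarith [hb]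
    · exact Filter.Tendsto.const_mul_atBot (div_pos (by linarith) (by positivity))
        Filter.tendsto_id
  exact ⟨fun x => (hHpos x).ne', fun x => (hRpos x).ne', hsm,
    hsm.injective, hcont.surjective htop hbot⟩
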